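/- Let Q be a Markov kernel on a Polish space X, d: X×X → [0,1] a distance-like function, V: X → ℝ₊ a continuous function integrable with respect to each Q(x,·) and satisfying (QV)(x) ≤ (1/8)V(x) + K_V for all x and some K_V > 0. Suppose there exists ε > 0 such that the lifted distance satisfies d(Q(x,·), Q(y,·)) ≤ 1 − ε for all x, y with V(x) + V(y) ≤ 4K_V. Then for every β > 0 and every pair x, y with d(x,y) = 1 and V(x) + V(y) ≤ 4K_V, the function d̃_β(x,y) = √(d(x,y)(1 + βV(x) + βV(y))) lifted to measures satisfies d̃_β(Q(x,·), Q(y,·))² ≤ (1 − ε)(1 + 4βK_V) d̃_β(x,y)². -/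

import Mathlib

open MeasureTheory ProbabilityTheory Filter Topology
open scoped ENNReal NNReal

noncomputable section

/-- A coupling of two measures: a measure on the product with the given marginals. -/
def IsCoupling {α β : Type*} [MeasurableSpace α] [MeasurableSpace β]
    (π : Measure (α × β)) (μ : Measure α) (ν : Measure β) : Prop :=
  π.map Prod.fst = μ ∧ π.map Prod.snd = ν

/-- The lift of a distance-like function `d` to probability measures. -/
def liftDist {α : Type*} [MeasurableSpace α] (d : α → α → ℝ) (μ ν : Measure α) : ℝ≥0∞ :=
  sInf {r : ℝ≥0∞ | ∃ π : Measure (α × α), IsCoupling π μ ν ∧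
    r = ∫⁻ p, ENNReal.ofReal (d p.1 p.2) ∂π}

/-- **"Close to the origin" estimate in the weak Harris theorem.** If `QV ≤ V/8 + K_V` and
the level set `{V(x)+V(y) ≤ 4K_V}` is `d`-small with constant `ε`, then for points in this
level set at `d`-distance `1`, the weighted distance
`d̃_β(x,y) = √(d(x,y)(1 + βV(x) + βV(y)))` contracts:
`d̃_β(Q(x,·),Q(y,·))² ≤ (1-ε)(1+4βK_V) d̃_β(x,y)²`. -/
theorem stmt_18 {X : Type*} [TopologicalSpace X] [PolishSpace X]
    [MeasurableSpace X] [BorelSpace X]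
    (Q : Kernel X X) [IsMarkovKernel Q]
    (d : X → X → ℝ)
    (hd_symm : ∀ x y, d x y = d y x)
    (hd_eq_zero : ∀ x y, d x y = 0 ↔ x = y)
    (hd_lsc : LowerSemicontinuous (fun p : X × X => d p.1 p.2))
    (hd_nonneg : ∀ x y, 0 ≤ d x y) (hd_le_one : ∀ x y, d x y ≤ 1)
    (V : X → ℝ) (hVcont : Continuous V) (hVnonneg : ∀ x, 0 ≤ V x)
    (hVint : ∀ x, Integrable V (Q x))
    (K_V : ℝ) (hK_V : 0 < K_V)
    (hQV : ∀ x, ∫ y, V y ∂(Q x) ≤ (1 / 8) * V x + K_V)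
    (ε : ℝ) (hε : 0 < ε)
    (hsmall : ∀ x y : X, V x + V y ≤ 4 * K_V →
      liftDist d (Q x) (Q y) ≤ ENNReal.ofReal (1 - ε)) :
    ∀ β : ℝ, 0 < β → ∀ x y : X, d x y = 1 → V x + V y ≤ 4 * K_V →
      (liftDist (fun a b => Real.sqrt (d a b * (1 + β * V a + β * V b))) (Q x) (Q y)) ^ 2
        ≤ ENNReal.ofReal
            ((1 - ε) * (1 + 4 * β * K_V) * (d x y * (1 + β * V x + β * V y))) := by
  intro β hβ x y hdxy hlevel
  have hVmeas : Measurable V := hVcont.measurable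
  have hdmeas : Measurable (fun p : X × X => d p.1 p.2) := hd_lsc.measurable
  set A := ENNReal.ofReal (1 - ε) with hA
  set C := ENNReal.ofReal (1 + 4 * β * K_V) with hC
  have hC0 : C ≠ 0 := by
    rw [hC, Ne, ENNReal.ofReal_eq_zero, not_le]; nlinarith
  have hCne : C ≠ ⊤ := ENNReal.ofReal_ne_top
  have hwnn : ∀ p : X × X, (0:ℝ) ≤ 1 + β * V p.1 + β * V p.2 := by
    intro p
    have h1 := mul_nonneg hβ.le (hVnonneg p.1)
    have h2 := mul_nonneg hβ.le (hVnonneg p.2)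
    linarith
  have hwcont : Continuous (fun p : X × X => 1 + β * V p.1 + β * V p.2) := by
    fun_prop
  have hwmeas : Measurable (fun p : X × X => ENNReal.ofReal (1 + β * V p.1 + β * V p.2)) :=
    ENNReal.measurable_ofReal.comp hwcont.measurable
  -- bound on the lintegral of the weight against any coupling
  have hwint : ∀ π : Measure (X × X), IsCoupling π (Q x) (Q y) →
      ∫⁻ p, ENNReal.ofReal (1 + β * V p.1 + β * V p.2) ∂π ≤ C := by
    intro π hπ
    have hprob : IsProbabilityMeasure π := by
      constructor
      have := congrArg (fun m : Measure X => m Set.univ) hπ.1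
      simpa [Measure.map_apply measurable_fst MeasurableSet.univ] using this
    have hmf : Measurable (fun p : X × X => ENNReal.ofReal (β * V p.1)) :=
      ENNReal.measurable_ofReal.comp ((measurable_const.mul hVmeas).comp measurable_fst)
    have hmg : Measurable (fun p : X × X => ENNReal.ofReal (β * V p.2)) :=
      ENNReal.measurable_ofReal.comp ((measurable_const.mul hVmeas).comp measurable_snd)
    have hVQ : ∀ z : X, ∫⁻ a, ENNReal.ofReal (β * V a) ∂(Q z)
        ≤ ENNReal.ofReal (β * ((1/8) * V z + K_V)) := by
      intro z
      rw [← ofReal_integral_eq_lintegral_ofReal ((hVint z).const_mul β)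
        (Filter.Eventually.of_forall fun a => mul_nonneg hβ.le (hVnonneg a))]
      apply ENNReal.ofReal_le_ofReal
      rw [integral_const_mul]
      exact mul_le_mul_of_nonneg_left (hQV z) hβ.le
    have hfst : ∫⁻ p, ENNReal.ofReal (β * V p.1) ∂π
        = ∫⁻ a, ENNReal.ofReal (β * V a) ∂(Q x) := by
      rw [← hπ.1, lintegral_map (hVmeas.const_mul β).ennreal_ofReal measurable_fst]
    have hsnd : ∫⁻ p, ENNReal.ofReal (β * V p.2) ∂π
        = ∫⁻ a, ENNReal.ofReal (β * V a) ∂(Q y) := by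
      rw [← hπ.2, lintegral_map (hVmeas.const_mul β).ennreal_ofReal measurable_snd]
    have hsplit : ∫⁻ p, ENNReal.ofReal (1 + β * V p.1 + β * V p.2) ∂π
        = 1 + (∫⁻ p, ENNReal.ofReal (β * V p.1) ∂π)
            + (∫⁻ p, ENNReal.ofReal (β * V p.2) ∂π) := by
      have : ∀ p : X × X, ENNReal.ofReal (1 + β * V p.1 + β * V p.2)
          = 1 + ENNReal.ofReal (β * V p.1) + ENNReal.ofReal (β * V p.2) := by
        intro p
        have h1 := mul_nonneg hβ.le (hVnonneg p.1)
        have h2 := mul_nonneg hβ.le (hVnonneg p.2)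
        rw [ENNReal.ofReal_add (by linarith) h2, ENNReal.ofReal_add (by norm_num) h1,
          ENNReal.ofReal_one]
      simp only [this]
      rw [lintegral_add_right _ hmg, lintegral_add_right _ hmf, lintegral_one, measure_univ]
    rw [hsplit, hfst, hsnd]
    calc 1 + (∫⁻ a, ENNReal.ofReal (β * V a) ∂(Q x))
          + (∫⁻ a, ENNReal.ofReal (β * V a) ∂(Q y))
        ≤ 1 + ENNReal.ofReal (β * ((1/8) * V x + K_V))
          + ENNReal.ofReal (β * ((1/8) * V y + K_V)) := by
          exact add_le_add (add_le_add le_rfl (hVQ x)) (hVQ y)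
      _ ≤ C := by
          have hx8 : (0:ℝ) ≤ β * ((1/8) * V x + K_V) := by
            nlinarith [mul_nonneg hβ.le (hVnonneg x), mul_nonneg hβ.le hK_V.le]
          have hy8 : (0:ℝ) ≤ β * ((1/8) * V y + K_V) := by
            nlinarith [mul_nonneg hβ.le (hVnonneg y), mul_nonneg hβ.le hK_V.le]
          rw [hC, ← ENNReal.ofReal_one, ← ENNReal.ofReal_add (by norm_num) hx8,
            ← ENNReal.ofReal_add (by linarith) hy8]
          apply ENNReal.ofReal_le_ofReal
          nlinarith [mul_le_mul_of_nonneg_left hlevel hβ.le, mul_nonneg hβ.le hK_V.le]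
  -- the key estimate with a slack δ
  set L := liftDist (fun a b => Real.sqrt (d a b * (1 + β * V a + β * V b))) (Q x) (Q y)
    with hL
  have key : ∀ δ : ℝ≥0∞, 0 < δ → δ ≠ ⊤ → L ^ 2 ≤ (A + δ) * C := by
    intro δ hδ hδtop
    have hlt : liftDist d (Q x) (Q y) < A + δ :=
      lt_of_le_of_lt (hsmall x y hlevel) (ENNReal.lt_add_right ENNReal.ofReal_ne_top hδ.ne')
    rw [liftDist, sInf_lt_iff] at hlt
    obtain ⟨r, ⟨π, hπ, hr⟩, hrlt⟩ := hlt
    -- Cauchy-Schwarz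
    set f : X × X → ℝ≥0∞ := fun p => ENNReal.ofReal (Real.sqrt (d p.1 p.2)) with hf
    set g : X × X → ℝ≥0∞ := fun p => ENNReal.ofReal (Real.sqrt (1 + β * V p.1 + β * V p.2))
      with hg
    have hfm : Measurable f :=
      ENNReal.measurable_ofReal.comp (Real.continuous_sqrt.measurable.comp hdmeas)
    have hgm : Measurable g :=
      ENNReal.measurable_ofReal.comp (Real.continuous_sqrt.measurable.comp hwcont.measurable)
    have hconj : Real.HolderConjugate 2 2 := ⟨by norm_num, by norm_num, by norm_num⟩
    have hholder := ENNReal.lintegral_mul_le_Lp_mul_Lq π hconj hfm.aemeasurable hgm.aemeasurable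
    have hf2 : ∀ p : X × X, f p ^ (2:ℝ) = ENNReal.ofReal (d p.1 p.2) := by
      intro p
      rw [hf, ENNReal.ofReal_rpow_of_nonneg (Real.sqrt_nonneg _) (by norm_num)]
      congr 1
      rw [show ((2:ℝ)) = ((2:ℕ):ℝ) by norm_num, Real.rpow_natCast, sq,
        Real.mul_self_sqrt (hd_nonneg _ _)]
    have hg2 : ∀ p : X × X, g p ^ (2:ℝ)
        = ENNReal.ofReal (1 + β * V p.1 + β * V p.2) := by
      intro p
      rw [hg, ENNReal.ofReal_rpow_of_nonneg (Real.sqrt_nonneg _) (by norm_num)]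
      congr 1
      rw [show ((2:ℝ)) = ((2:ℕ):ℝ) by norm_num, Real.rpow_natCast, sq,
        Real.mul_self_sqrt (hwnn p)]
    have hprod : ∀ p : X × X,
        ENNReal.ofReal (Real.sqrt (d p.1 p.2 * (1 + β * V p.1 + β * V p.2))) = (f * g) p := by
      intro p
      simp only [Pi.mul_apply, hf, hg]
      rw [Real.sqrt_mul (hd_nonneg _ _), ENNReal.ofReal_mul (Real.sqrt_nonneg _)]
    have hLle : L ≤ ∫⁻ p, (f * g) p ∂π := by
      rw [hL, liftDist]
      refine sInf_le ⟨π, hπ, ?_⟩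
      exact (lintegral_congr fun p => hprod p).symm
    set W := ∫⁻ p, ENNReal.ofReal (1 + β * V p.1 + β * V p.2) ∂π with hW
    have hrW : L ≤ r ^ (1/2:ℝ) * W ^ (1/2:ℝ) := by
      refine hLle.trans (hholder.trans ?_)
      apply le_of_eq
      congr 1
      · congr 1
        rw [hr]
        exact lintegral_congr fun p => hf2 p
      · congr 1
        exact lintegral_congr fun p => hg2 p
    have hsq : (r ^ (1/2:ℝ) * W ^ (1/2:ℝ)) ^ 2 = r * W := by
      rw [mul_pow, ← ENNReal.rpow_natCast (r ^ (1/2:ℝ)) 2,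
        ← ENNReal.rpow_natCast (W ^ (1/2:ℝ)) 2, ← ENNReal.rpow_mul, ← ENNReal.rpow_mul]
      norm_num
    calc L ^ 2 ≤ (r ^ (1/2:ℝ) * W ^ (1/2:ℝ)) ^ 2 := pow_le_pow_left₀ (zero_le (a := L)) hrW 2
      _ = r * W := hsq
      _ ≤ (A + δ) * C := mul_le_mul' hrlt.le (hwint π hπ)
  -- remove the slack
  have hAC : L ^ 2 ≤ A * C := by
    refine ENNReal.le_of_forall_pos_le_add fun η hη hlt => ?_
    have hδ : (0:ℝ≥0∞) < (η : ℝ≥0∞) / C := ENNReal.div_pos (by exact_mod_cast hη.ne') hCne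
    have hδtop : (η : ℝ≥0∞) / C ≠ ⊤ := by
      simp [ENNReal.div_eq_top, hC0]
    calc L ^ 2 ≤ (A + (η : ℝ≥0∞) / C) * C := key _ hδ hδtop
      _ = A * C + (η : ℝ≥0∞) / C * C := by rw [add_mul]
      _ ≤ A * C + η := by
          gcongr
          exact le_of_eq (ENNReal.div_mul_cancel hC0 hCne)
  -- conclude
  refine hAC.trans ?_
  rcases le_or_gt (1 - ε) 0 with h1 | h1
  · have : A = 0 := by rw [hA, ENNReal.ofReal_eq_zero]; exact h1
    simp [this]
  · rw [hA, hC, ← ENNReal.ofReal_mul h1.le]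
    apply ENNReal.ofReal_le_ofReal
    rw [hdxy]
    have hw1 : (1:ℝ) ≤ 1 * (1 + β * V x + β * V y) := by
      have h1x := mul_nonneg hβ.le (hVnonneg x)
      have h1y := mul_nonneg hβ.le (hVnonneg y)
      nlinarith
    nlinarith [mul_nonneg h1.le (by nlinarith : (0:ℝ) ≤ 1 + 4 * β * K_V)]
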